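/- For every connected graph G with minimum degree δ, the FAT chromatic number of G is at most δ + 1. -/
import Mathlib


open SimpleGraph
open scoped Classical

/-- A FAT `k`-coloring of a graph `G`: a partition of the vertex set into `k`
nonempty color classes `P 0, ..., P (k-1)` together with parameters
`α, β ∈ [0,1]` such that every vertex `v` has exactly `α · deg v` neighbors in
each class not containing `v` and exactly `β · deg v` neighbors in its own class. -/
def IsFATColoring {V : Type*} (G : SimpleGraph V) (k : ℕ)
    (P : Fin k → Set V) (α β : ℝ) : Prop :=
  (∀ i, (P i).Nonempty) ∧
  (∀ v : V, ∃! i, v ∈ P i) ∧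
  0 ≤ α ∧ α ≤ 1 ∧ 0 ≤ β ∧ β ≤ 1 ∧
  ∀ (v : V) (i : Fin k),
    ((G.neighborSet v ∩ P i).ncard : ℝ) =
      if v ∈ P i then β * (G.neighborSet v).ncard
      else α * (G.neighborSet v).ncard

/-- The FAT chromatic number of `G`: the largest `k` for which `G` admits a
FAT `k`-coloring. -/
noncomputable def fatChromaticNumber {V : Type*} (G : SimpleGraph V) : ℕ :=
  sSup {k : ℕ | ∃ P : Fin k → Set V, ∃ α β : ℝ, IsFATColoring G k P α β}

theorem fat_le_minDegree_succ {V : Type*} [Fintype V] (G : SimpleGraph V)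
    [DecidableRel G.Adj] (h : G.Connected) :
    fatChromaticNumber G ≤ G.minDegree + 1 := by
  apply csSup_le'
  rintro k ⟨P, α, β, hne, huniq, hα0, -, -, -, hcnt⟩
  -- trivial if k ≤ 1
  rcases le_or_gt k 1 with hk | hk
  · omega
  have hV : Nonempty V := h.nonempty
  -- the class function
  set c : V → Fin k := fun u => (huniq u).choose with hc
  have hmem : ∀ u, u ∈ P (c u) := fun u => (huniq u).choose_spec.1
  have hueq : ∀ u i, u ∈ P i → i = c u := fun u i hi =>
    ((huniq u).choose_spec.2 i hi)
  -- neighbor sets are finite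
  have hfin : ∀ (u : V) (i : Fin k), (G.neighborSet u ∩ P i).Finite :=
    fun u i => Set.toFinite _
  -- if u w adjacent and different classes, then α * deg u ≥ 1 (in particular α > 0)
  have key : ∀ u w, G.Adj u w → c u ≠ c w → (1 : ℝ) ≤ α * (G.neighborSet u).ncard := by
    intro u w huw hne'
    have hwmem : w ∈ G.neighborSet u ∩ P (c w) := ⟨huw, hmem w⟩
    have hnotin : u ∉ P (c w) := fun hu => hne' (hueq u _ hu).symm
    have := hcnt u (c w)
    rw [if_neg hnotin] at this
    have hpos : 0 < (G.neighborSet u ∩ P (c w)).ncard :=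
      (Set.ncard_pos (hfin u (c w))).2 ⟨w, hwmem⟩
    calc (1:ℝ) ≤ ((G.neighborSet u ∩ P (c w)).ncard : ℝ) := by exact_mod_cast hpos
      _ = α * (G.neighborSet u).ncard := this
  -- ncard of neighborSet equals degree
  have hncd : ∀ u : V, (G.neighborSet u).ncard = G.degree u := by
    intro u
    rw [Set.ncard_eq_toFinset_card']
    simp [SimpleGraph.neighborFinset, ← SimpleGraph.card_neighborFinset_eq_degree]
  -- there is a crossing edge
  have hcross : ∃ u w, G.Adj u w ∧ c u ≠ c w := by
    by_contra hno
    push_neg at hno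
    have hwalk : ∀ a b : V, G.Reachable a b → c a = c b := by
      intro a b hr
      obtain ⟨p⟩ := hr
      induction p with
      | nil => rfl
      | cons ha _ ih => exact (hno _ _ ha).trans ih
    obtain v₀ := hV.some
    set i₁ : Fin k := if c v₀ = ⟨0, by omega⟩ then ⟨1, by omega⟩ else ⟨0, by omega⟩ with hi₁
    have hne₁ : i₁ ≠ c v₀ := by
      rw [hi₁]; split <;> simp_all <;> omega
    obtain ⟨w, hw⟩ := hne i₁
    have h1 : i₁ = c w := hueq w i₁ hw
    have h2 : c v₀ = c w := hwalk v₀ w (h.preconnected v₀ w)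
    exact hne₁ (h1.trans h2.symm)
  obtain ⟨u₀, w₀, hadj, hcuw⟩ := hcross
  -- α is positive
  have hαpos : 0 < α := by
    have h1 := key u₀ w₀ hadj hcuw
    by_contra hle
    push_neg at hle
    have : α * ((G.neighborSet u₀).ncard : ℝ) ≤ 0 :=
      mul_nonpos_of_nonpos_of_nonneg hle (by positivity)
    linarith
  -- a minimal degree vertex
  obtain ⟨v, hv⟩ := G.exists_minimal_degree_vertex
  have hdegpos : 0 < G.degree v := by
    rw [G.degree_pos_iff_exists_adj]
    obtain ⟨p⟩ := h.preconnected v u₀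
    cases p with
    | nil => exact ⟨w₀, hadj⟩
    | cons ha _ => exact ⟨_, ha⟩
  -- every other class meets the neighborhood of v
  have hmeets : ∀ i : Fin k, i ≠ c v → (G.neighborSet v ∩ P i).Nonempty := by
    intro i hi
    have hvn : v ∉ P i := fun hvi => hi (hueq v i hvi)
    have := hcnt v i
    rw [if_neg hvn, hncd] at this
    have hpos : (0:ℝ) < α * (G.degree v : ℝ) := by positivity
    rw [← this] at hpos
    have : 0 < (G.neighborSet v ∩ P i).ncard := by exact_mod_cast hpos
    exact ((Set.ncard_pos (hfin v i)).1 this)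
  -- build an injection from the other classes into the neighborhood
  have hinj : ∃ f : {i : Fin k // i ≠ c v} → ↥(G.neighborSet v),
      Function.Injective f := by
    choose f hf using fun i : {i : Fin k // i ≠ c v} => hmeets i.1 i.2
    refine ⟨fun i => ⟨f i, (hf i).1⟩, fun i j hij => ?_⟩
    have h1 : f i ∈ P i.1 := (hf i).2
    have h2 : f j ∈ P j.1 := (hf j).2
    have : f i = f j := congrArg Subtype.val hij
    rw [this] at h1
    exact Subtype.ext ((hueq _ _ h1).trans (hueq _ _ h2).symm)
  obtain ⟨f, hf⟩ := hinj
  have hcard := Fintype.card_le_of_injective f hf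
  have hc1 : Fintype.card {i : Fin k // i ≠ c v} = k - 1 := by
    rw [Fintype.card_subtype_compl]
    simp
  have hc2 : Fintype.card ↥(G.neighborSet v) = G.degree v :=
    G.card_neighborSet_eq_degree v
  rw [hc1, hc2, ← hv] at hcard
  omega
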